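/- For every ω₀ > 0 and every integer x, the integral ∫₀¹ cos(2πux)/(4 sin²(πu) + ω₀²) du equals (1/(ω₀ √(ω₀² + 4))) · (1 + ω₀²/2 + ω₀ √(1 + ω₀²/4))^(−|x|). -/

import Mathlib

open Real intervalIntegral


private noncomputable def pD (ρ u : ℝ) : ℝ := 1 - 2*ρ*Real.cos (2*π*u) + ρ^2

private lemma pD_pos {ρ : ℝ} (h0 : 0 < ρ) (h1 : ρ < 1) (u : ℝ) : 0 < pD ρ u := by
  have hc := Real.cos_le_one (2*π*u)
  have hc' := Real.neg_one_le_cos (2*π*u)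
  unfold pD; nlinarith

private lemma pD_cont (ρ : ℝ) : Continuous (pD ρ) := by
  unfold pD; fun_prop

private lemma pInt {ρ : ℝ} (h0 : 0 < ρ) (h1 : ρ < 1) (c : ℝ) :
    IntervalIntegrable (fun u => Real.cos (2*π*u*c) * (pD ρ u)⁻¹)
      MeasureTheory.volume 0 1 := by
  apply Continuous.intervalIntegrable
  apply Continuous.mul (by fun_prop)
  exact ((pD_cont ρ).inv₀ (fun u => (pD_pos h0 h1 u).ne'))

private lemma cos_integral_zero (m : ℕ) :
    ∫ u in (0:ℝ)..1, Real.cos (2*π*u*((m:ℝ)+1)) = 0 := by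
  have hF : ∀ u ∈ Set.uIcc (0:ℝ) 1,
      HasDerivAt (fun u => Real.sin (2*π*u*((m:ℝ)+1)) / (2*π*((m:ℝ)+1)))
        (Real.cos (2*π*u*((m:ℝ)+1))) u := by
    intro u _
    have hlin : HasDerivAt (fun u : ℝ => 2*π*u*((m:ℝ)+1)) (2*π*((m:ℝ)+1)) u := by
      simpa [mul_comm, mul_assoc, mul_left_comm] using
        (hasDerivAt_id u).const_mul (2*π*((m:ℝ)+1))
    have := ((Real.hasDerivAt_sin _).comp u hlin).div_const (2*π*((m:ℝ)+1))
    have hne : 2*π*((m:ℝ)+1) ≠ 0 := by positivity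
    refine this.congr_deriv ?_
    field_simp
  rw [intervalIntegral.integral_eq_sub_of_hasDerivAt hF ((by fun_prop : Continuous fun u : ℝ => Real.cos (2*π*u*((m:ℝ)+1))).intervalIntegrable 0 1)]
  have h1 : 2*π*(1:ℝ)*((m:ℝ)+1) = ((2*(m+1) : ℤ) : ℝ) * π := by push_cast; ring
  rw [h1, Real.sin_int_mul_pi]
  norm_num

private lemma pD_base {ρ : ℝ} (h0 : 0 < ρ) (h1 : ρ < 1) :
    ∫ u in (0:ℝ)..1, (pD ρ u)⁻¹ = (1 - ρ^2)⁻¹ := by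
  have hden : ∀ u : ℝ, 0 < 1 - ρ * Real.cos (2*π*u) := by
    intro u
    have hc := Real.cos_le_one (2*π*u)
    nlinarith
  have hF : ∀ u ∈ Set.uIcc (0:ℝ) 1,
      HasDerivAt (fun u => (2*π*u + 2 * Real.arctan
          (ρ * Real.sin (2*π*u) / (1 - ρ * Real.cos (2*π*u)))) / (2*π*(1-ρ^2)))
        ((pD ρ u)⁻¹) u := by
    intro u _
    have hlin : HasDerivAt (fun u : ℝ => 2*π*u) (2*π) u := by
      simpa using (hasDerivAt_id u).const_mul (2*π)
    have hs : HasDerivAt (fun u : ℝ => Real.sin (2*π*u)) (Real.cos (2*π*u) * (2*π)) u :=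
      (Real.hasDerivAt_sin _).comp u hlin
    have hc : HasDerivAt (fun u : ℝ => Real.cos (2*π*u)) (-Real.sin (2*π*u) * (2*π)) u :=
      (Real.hasDerivAt_cos _).comp u hlin
    have hd : HasDerivAt (fun u : ℝ => 1 - ρ * Real.cos (2*π*u))
        (-(ρ * (-Real.sin (2*π*u) * (2*π)))) u := (hc.const_mul ρ).const_sub 1
    have hq := ((hs.const_mul ρ).div hd (hden u).ne')
    have harc := hq.arctan
    have hall := hlin.add (harc.const_mul 2)
    have := hall.div_const (2*π*(1-ρ^2))
    refine this.congr_deriv ?_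
    simp only [Pi.div_apply]
    have hpi : (0:ℝ) < π := Real.pi_pos
    have hD := pD_pos h0 h1 u
    have hpy := Real.sin_sq_add_cos_sq (2*π*u)
    have hρ2 : (1:ℝ) - ρ^2 ≠ 0 := by nlinarith
    unfold pD at hD ⊢
    set C := Real.cos (2*π*u) with hC
    set S := Real.sin (2*π*u) with hS
    have e2 : ρ * (C * (2*π)) * (1 - ρ*C) - ρ*S*-(ρ*(-S*(2*π))) = 2*π*ρ*(C-ρ) := by
      linear_combination (-(2*π*ρ^2)) * hpy
    have e1 : 1 + (ρ*S/(1-ρ*C))^2 = (1 - 2*ρ*C + ρ^2)/(1-ρ*C)^2 := by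
      rw [eq_div_iff (pow_ne_zero 2 (hden u).ne'), add_mul, div_pow,
        div_mul_cancel₀ _ (pow_ne_zero 2 (hden u).ne')]
      linear_combination ρ^2 * hpy
    rw [e2, e1, one_div_div]
    field_simp [show 1 - ρ*C ≠ 0 from (hden u).ne', hD.ne']
    ring
  rw [intervalIntegral.integral_eq_sub_of_hasDerivAt hF
    (((pD_cont ρ).inv₀ (fun u => (pD_pos h0 h1 u).ne')).intervalIntegrable 0 1)]
  have hρ2 : (1:ℝ) - ρ^2 ≠ 0 := by nlinarith
  have h1 : Real.sin (2*π*(1:ℝ)) = 0 := by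
    have : 2*π*(1:ℝ) = ((2:ℤ):ℝ)*π := by push_cast; ring
    rw [this, Real.sin_int_mul_pi]
  have h0' : Real.sin (2*π*(0:ℝ)) = 0 := by norm_num
  rw [h1, h0']
  norm_num
  field_simp

private lemma pK_one {ρ : ℝ} (h0 : 0 < ρ) (h1 : ρ < 1) :
    ∫ u in (0:ℝ)..1, Real.cos (2*π*u) * (pD ρ u)⁻¹ = ρ / (1 - ρ^2) := by
  have hρ2 : (1:ℝ) - ρ^2 ≠ 0 := by nlinarith
  have key : ∀ u : ℝ, Real.cos (2*π*u) * (pD ρ u)⁻¹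
      = (1+ρ^2)/(2*ρ) * (pD ρ u)⁻¹ - 1/(2*ρ) := by
    intro u
    have hD := (pD_pos h0 h1 u).ne'
    have hDe : pD ρ u = 1 - 2*ρ*Real.cos (2*π*u) + ρ^2 := rfl
    have hρ := h0.ne'
    generalize pD ρ u = D at hD hDe ⊢
    field_simp
    subst hDe
    ring
  rw [intervalIntegral.integral_congr (fun u _ => key u)]
  have hint : IntervalIntegrable (fun u => (1+ρ^2)/(2*ρ) * (pD ρ u)⁻¹)
      MeasureTheory.volume 0 1 :=
    (continuous_const.mul ((pD_cont ρ).inv₀ (fun u => (pD_pos h0 h1 u).ne'))).intervalIntegrable 0 1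
  rw [intervalIntegral.integral_sub hint (intervalIntegrable_const),
    intervalIntegral.integral_const_mul, pD_base h0 h1]
  simp only [intervalIntegral.integral_const, smul_eq_mul]
  field_simp
  ring

private lemma pK_rec {ρ : ℝ} (h0 : 0 < ρ) (h1 : ρ < 1) (n : ℕ) :
    ∫ u in (0:ℝ)..1, Real.cos (2*π*u*((n:ℝ)+2)) * (pD ρ u)⁻¹
      = (1+ρ^2)/ρ * (∫ u in (0:ℝ)..1, Real.cos (2*π*u*((n:ℝ)+1)) * (pD ρ u)⁻¹)
        - ∫ u in (0:ℝ)..1, Real.cos (2*π*u*(n:ℝ)) * (pD ρ u)⁻¹ := by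
  have key : ∀ u : ℝ, Real.cos (2*π*u*((n:ℝ)+2)) * (pD ρ u)⁻¹
      = ((1+ρ^2)/ρ * (Real.cos (2*π*u*((n:ℝ)+1)) * (pD ρ u)⁻¹)
          - Real.cos (2*π*u*(n:ℝ)) * (pD ρ u)⁻¹)
        - (1/ρ) * Real.cos (2*π*u*((n:ℝ)+1)) := by
    intro u
    have hD := (pD_pos h0 h1 u).ne'
    have hA : 2*π*u*((n:ℝ)+2) = (2*π*u*((n:ℝ)+1)) + 2*π*u := by ring
    have hB : 2*π*u*(n:ℝ) = (2*π*u*((n:ℝ)+1)) - 2*π*u := by ring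
    rw [hA, hB, Real.cos_add, Real.cos_sub]
    have hDe : pD ρ u = 1 - 2*ρ*Real.cos (2*π*u) + ρ^2 := rfl
    have hρ := h0.ne'
    generalize pD ρ u = D at hD hDe ⊢
    field_simp
    subst hDe
    ring
  rw [intervalIntegral.integral_congr (fun u _ => key u)]
  have h1' : IntervalIntegrable
      (fun u => (1+ρ^2)/ρ * (Real.cos (2*π*u*((n:ℝ)+1)) * (pD ρ u)⁻¹))
      MeasureTheory.volume 0 1 := (pInt h0 h1 _).const_mul _
  have h2' : IntervalIntegrable
      (fun u => (1/ρ) * Real.cos (2*π*u*((n:ℝ)+1))) MeasureTheory.volume 0 1 :=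
    ((by fun_prop : Continuous fun u : ℝ => Real.cos (2*π*u*((n:ℝ)+1))).intervalIntegrable 0 1).const_mul _
  rw [intervalIntegral.integral_sub (h1'.sub (pInt h0 h1 _)) h2',
    intervalIntegral.integral_sub h1' (pInt h0 h1 _),
    intervalIntegral.integral_const_mul, intervalIntegral.integral_const_mul,
    cos_integral_zero n]
  ring

private lemma pK_eq {ρ : ℝ} (h0 : 0 < ρ) (h1 : ρ < 1) (n : ℕ) :
    ∫ u in (0:ℝ)..1, Real.cos (2*π*u*(n:ℝ)) * (pD ρ u)⁻¹ = ρ^n / (1 - ρ^2) := by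
  induction n using Nat.strong_induction_on with
  | _ n ih =>
    match n with
    | 0 => simpa using pD_base h0 h1
    | 1 => simpa using pK_one h0 h1
    | (m+2) =>
      have e2 : ((m:ℝ)+2) = (((m+2:ℕ)):ℝ) := by push_cast; ring
      have e1 : ((m:ℝ)+1) = (((m+1:ℕ)):ℝ) := by push_cast; ring
      have := pK_rec h0 h1 m
      rw [e2, e1] at this
      rw [this, ih (m+1) (by omega), ih m (by omega)]
      have hρ2 : (1:ℝ) - ρ^2 ≠ 0 := by nlinarith
      field_simp
      ring


/-- Closed form of the lattice Green's function `G_{ω₀}(x) = (−Δ + ω₀²)⁻¹(x)`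
on `ℤ`: for every `ω₀ > 0` and every integer `x`,
`∫₀¹ cos(2πux)/(4 sin²(πu) + ω₀²) du
  = (1/(ω₀ √(ω₀² + 4))) (1 + ω₀²/2 + ω₀ √(1 + ω₀²/4))^(−|x|)`. -/
theorem green_function_closed_form (ω₀ : ℝ) (hω : 0 < ω₀) (x : ℤ) :
    ∫ u in (0:ℝ)..1, Real.cos (2 * π * u * (x : ℝ)) / (4 * Real.sin (π * u) ^ 2 + ω₀ ^ 2)
      = (1 / (ω₀ * Real.sqrt (ω₀ ^ 2 + 4))) *
        (1 + ω₀ ^ 2 / 2 + ω₀ * Real.sqrt (1 + ω₀ ^ 2 / 4)) ^ (-|x|) := by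
  set s0 : ℝ := Real.sqrt (1 + ω₀ ^ 2 / 4) with hs0def
  have hs0pos : 0 < s0 := Real.sqrt_pos.mpr (by positivity)
  have hs0 : s0 ^ 2 = 1 + ω₀ ^ 2 / 4 := Real.sq_sqrt (by positivity)
  set r : ℝ := 1 + ω₀ ^ 2 / 2 + ω₀ * s0 with hrdef
  set ρ : ℝ := 1 + ω₀ ^ 2 / 2 - ω₀ * s0 with hρdef
  have hrρ : ρ * r = 1 := by rw [hrdef, hρdef]; nlinarith [hs0]
  have hrpos : 1 < r := by rw [hrdef]; nlinarith
  have hρ0 : 0 < ρ := by nlinarith [hrρ]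
  have hρ1 : ρ < 1 := by nlinarith [hrρ]
  set n : ℕ := x.natAbs with hndef
  have hxabs : ((x:ℝ)) = (n:ℝ) ∨ ((x:ℝ)) = -(n:ℝ) := by
    rcases Int.natAbs_eq x with h | h
    · left
      conv_lhs => rw [h]
      rw [Int.cast_natCast, hndef]
    · right
      conv_lhs => rw [h]
      rw [Int.cast_neg, Int.cast_natCast, hndef]
  have hcos : ∀ u : ℝ, Real.cos (2*π*u*(x:ℝ)) = Real.cos (2*π*u*(n:ℝ)) := by
    intro u
    rcases hxabs with h | h
    · rw [h]
    · rw [h, show 2*π*u*(-(n:ℝ)) = -(2*π*u*(n:ℝ)) by ring, Real.cos_neg]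
  have key : 1 + ρ^2 = (2 + ω₀^2)*ρ := by
    have : ρ + r = 2 + ω₀^2 := by rw [hrdef, hρdef]; ring
    nlinarith [hrρ]
  have hden : ∀ u : ℝ, 4*Real.sin (π*u)^2 + ω₀^2 = (pD ρ u)/ρ := by
    intro u
    rw [Real.sin_sq_eq_half_sub (π*u), show 2*(π*u) = 2*π*u by ring]
    unfold pD
    rw [eq_div_iff hρ0.ne']
    linear_combination key + (-(2*ω₀^2))*hs0
  have hint : ∀ u : ℝ, Real.cos (2*π*u*(x:ℝ)) / (4*Real.sin (π*u)^2 + ω₀^2)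
      = ρ * (Real.cos (2*π*u*(n:ℝ)) * (pD ρ u)⁻¹) := by
    intro u
    rw [hcos u, hden u, div_div_eq_mul_div, div_eq_mul_inv]
    ring
  rw [intervalIntegral.integral_congr (fun u _ => hint u),
    intervalIntegral.integral_const_mul, pK_eq hρ0 hρ1 n]
  have hsq : Real.sqrt (ω₀^2 + 4) = 2*s0 := by
    rw [show ω₀^2 + 4 = (2*s0)^2 by nlinarith [hs0]]
    exact Real.sqrt_sq (by positivity)
  rw [hsq, Int.abs_eq_natAbs, ← hndef]
  rw [show -((n:ℤ)) = -(n:ℤ) by rfl, zpow_neg, zpow_natCast]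
  have hrinv : r⁻¹ = ρ := inv_eq_of_mul_eq_one_left hrρ
  rw [← inv_pow, hrinv]
  have h1ρ : 1 - ρ^2 = 2*ω₀*s0*ρ := by
    have : r - ρ = 2*(ω₀*s0) := by rw [hrdef, hρdef]; ring
    nlinarith [hrρ]
  rw [h1ρ]
  have : ω₀*s0*ρ ≠ 0 := by positivity
  field_simp
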